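/- Let f : X → Y be a fully closed continuous map from a normal space X, and let L ⊆ X be a closed Gδ-set. Then f(L) ∩ f(X \ L) is a countable union of subsets of Y each of which is closed and discrete in Y. -/

import Mathlib

open Set Topology

variable {X Y : Type*} [TopologicalSpace X] [TopologicalSpace Y]

/-- A map is fully closed if images of disjoint closed sets meet in a discrete subspace. -/
def IsFullyClosedMap (f : X → Y) : Prop :=
  ∀ F G : Set X, IsClosed F → IsClosed G → Disjoint F G →
    DiscreteTopology ↥(f '' F ∩ f '' G)

/-- A map is ring-like if every neighborhood pair admits a smaller neighborhood of the image
point whose frontier has preimage inside the given neighborhood of the point. -/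
def IsRingLike (f : X → Y) : Prop :=
  ∀ x : X, ∀ U : Set X, ∀ V : Set Y, IsOpen U → x ∈ U → IsOpen V → f x ∈ V →
    ∃ V' : Set Y, IsOpen V' ∧ f x ∈ V' ∧ V' ⊆ V ∧ f ⁻¹' (frontier V') ⊆ U

/-- A subcontinuum: a compact connected subset. -/
def IsSubcontinuum (A : Set X) : Prop := IsCompact A ∧ IsConnected A

/-- A terminal subcontinuum. -/
def IsTerminalSubcontinuum (A : Set X) : Prop :=
  IsSubcontinuum A ∧ ∀ B : Set X, IsSubcontinuum B → A ∩ B = ∅ ∨ A ⊆ B ∨ B ⊆ A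

/-- An atomic map: point-inverses (of points in the range) are terminal subcontinua. -/
def IsAtomicMap (f : X → Y) : Prop :=
  ∀ y ∈ Set.range f, IsTerminalSubcontinuum (f ⁻¹' {y})

/-- `L` is a partition in `X` between `A` and `B`. -/
def IsPartitionBetween (L A B : Set X) : Prop :=
  IsClosed L ∧ ∃ U V : Set X, IsOpen U ∧ IsOpen V ∧ Disjoint U V ∧
    Lᶜ = U ∪ V ∧ A ⊆ U ∧ B ⊆ V

/-- Covering dimension at most `n`. -/
def CovDimLE (X : Type*) [TopologicalSpace X] (n : ℕ) : Prop :=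
  ∀ (k : ℕ) (U : Fin k → Set X), (∀ i, IsOpen (U i)) → (⋃ i, U i) = Set.univ →
    ∃ (m : ℕ) (V : Fin m → Set X), (∀ j, IsOpen (V j)) ∧ (⋃ j, V j) = Set.univ ∧
      (∀ j, ∃ i, V j ⊆ U i) ∧ ∀ x : X, Set.ncard {j | x ∈ V j} ≤ n + 1

/-- `IndLE n X` means the small inductive dimension of `X` is at most `n - 1`;
in particular `IndLE 0 X` means `X` is empty. -/
def IndLE : ℕ → (X : Type u) → [TopologicalSpace X] → Prop
  | 0, X, _ => IsEmpty X
  | n+1, X, _ => ∀ (x : X) (V : Set X), IsOpen V → x ∈ V →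
      ∃ U : Set X, IsOpen U ∧ x ∈ U ∧ U ⊆ V ∧ IndLE n ↥(frontier U)

theorem statement11 {X Y : Type*} [TopologicalSpace X] [TopologicalSpace Y]
    [NormalSpace X]
    (f : X → Y) (hf : Continuous f) (hcl : IsClosedMap f)
    (hfc : IsFullyClosedMap f)
    (L : Set X) (hL : IsClosed L) (hGd : IsGδ L) :
    ∃ D : ℕ → Set Y, (∀ n, IsClosed (D n) ∧ DiscreteTopology ↥(D n)) ∧
      f '' L ∩ f '' Lᶜ = ⋃ n, D n := by
  obtain ⟨U, hUopen, hLU⟩ := hGd.eq_iInter_nat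
  choose A B hAopen hBopen hLA hUB hAB using fun n =>
    NormalSpace.normal L (U n)ᶜ hL (hUopen n).isClosed_compl (by
        rw [hLU]; exact Set.disjoint_compl_right_iff_subset.mpr (Set.iInter_subset U n))
  refine ⟨fun n => f '' L ∩ f '' (A n)ᶜ, fun n => ⟨?_, ?_⟩, ?_⟩
  · exact (hcl L hL).inter (hcl _ (hAopen n).isClosed_compl)
  · exact hfc L (A n)ᶜ hL (hAopen n).isClosed_compl
      (Set.disjoint_compl_right_iff_subset.mpr (hLA n))
  · apply Set.Subset.antisymm
    · rintro y ⟨⟨x, hxL, rfl⟩, ⟨x', hx', hx'y⟩⟩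
      have : x' ∉ L := hx'
      rw [hLU] at this
      obtain ⟨n, hn⟩ := by simpa [Set.mem_iInter] using this
      have hx'A : x' ∈ (A n)ᶜ := fun hxA =>
        Set.disjoint_left.mp (hAB n) hxA (hUB n hn)
      exact Set.mem_iUnion.mpr ⟨n, ⟨x, hxL, rfl⟩, ⟨x', hx'A, hx'y⟩⟩
    · refine Set.iUnion_subset fun n => Set.inter_subset_inter_right _
        (Set.image_mono (f := f) ?_)
      exact fun x hx hxL => hx (hLA n hxL)
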